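/- An eigenvalue θ of the adjacency matrix of a graph G lies in the eigenvalue support of a vertex i (i.e., E_θ e_i ≠ 0) if and only if (E_θ)_{i,i} > 0, and consequently the eigenvalue support of i is exactly the set of poles of the rational function φ^{G\i}/φ^G. -/

import Mathlib

open Polynomial Matrix Finset

section AuxEigen

lemma charmatrix_submatrix_inj' {V W : Type*} [Fintype V] [DecidableEq V]
    [Fintype W] [DecidableEq W] (A : Matrix V V ℝ) (f : W → V)
    (hf : Function.Injective f) :
    (charmatrix A).submatrix f f = charmatrix (A.submatrix f f) := by
  ext a b
  by_cases h : a = b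
  · subst h; simp [charmatrix_apply_eq]
  · rw [submatrix_apply, charmatrix_apply_ne _ _ _ (fun hh => h (hf hh)),
      charmatrix_apply_ne _ _ _ h, submatrix_apply]

lemma aux_adjugate_diag' {V : Type*} [Fintype V] [DecidableEq V]
    (A : Matrix V V ℝ) (i : V) :
    (charmatrix A).adjugate i i =
      (A.submatrix (Subtype.val : {v // v ∉ ({i} : Finset V)} → V) Subtype.val).charpoly := by
  obtain ⟨m, hm⟩ : ∃ m, Fintype.card V = m + 1 :=
    ⟨Fintype.card V - 1, (Nat.succ_pred_eq_of_pos (Fintype.card_pos_iff.mpr ⟨i⟩)).symm⟩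
  let e0 := Fintype.equivFinOfCardEq hm
  let e : V ≃ Fin (m + 1) := e0.trans (Equiv.swap (e0 i) 0)
  have hei : e i = 0 := by simp [e, Equiv.swap_apply_left]
  have hsym0 : e.symm 0 = i := by rw [← hei, Equiv.symm_apply_apply]
  have hinj : Function.Injective (⇑e.symm ∘ Fin.succ) :=
    e.symm.injective.comp (Fin.succ_injective m)
  let u : Fin m ≃ {v // v ∉ ({i} : Finset V)} :=
  { toFun := fun k => ⟨e.symm k.succ, by
      simp only [Finset.mem_singleton]
      intro h
      apply Fin.succ_ne_zero k
      have := congrArg e h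
      rwa [Equiv.apply_symm_apply, hei] at this⟩
    invFun := fun v => (e v.1).pred (by
      intro h
      exact absurd (Finset.mem_singleton.mpr (e.injective (h.trans hei.symm))) v.2)
    left_inv := fun k => by simp
    right_inv := fun v => by
      apply Subtype.ext
      simp }
  calc (charmatrix A).adjugate i i
      = ((charmatrix A).submatrix ⇑e.symm ⇑e.symm).adjugate 0 0 := by
        rw [adjugate_submatrix_equiv_self e.symm (charmatrix A)]
        rw [submatrix_apply, hsym0]
    _ = (((charmatrix A).submatrix ⇑e.symm ⇑e.symm).submatrix
          (Fin.succAbove 0) (Fin.succAbove 0)).det := by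
        rw [adjugate_fin_succ_eq_det_submatrix]; norm_num
    _ = ((charmatrix A).submatrix (⇑e.symm ∘ Fin.succ) (⇑e.symm ∘ Fin.succ)).det := by
        rw [submatrix_submatrix, Fin.succAbove_zero]
    _ = (charmatrix (A.submatrix (⇑e.symm ∘ Fin.succ) (⇑e.symm ∘ Fin.succ))).det := by
        rw [charmatrix_submatrix_inj' _ _ hinj]
    _ = (A.submatrix (⇑e.symm ∘ Fin.succ) (⇑e.symm ∘ Fin.succ)).charpoly := rfl
    _ = ((A.submatrix (Subtype.val : {v // v ∉ ({i} : Finset V)} → V) Subtype.val).submatrix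
          ⇑u ⇑u).charpoly := by
        rw [submatrix_submatrix]; rfl
    _ = (A.submatrix (Subtype.val : {v // v ∉ ({i} : Finset V)} → V) Subtype.val).charpoly := by
        have h2 : (A.submatrix (Subtype.val : {v // v ∉ ({i} : Finset V)} → V)
            Subtype.val).submatrix ⇑u ⇑u =
            reindex u.symm u.symm (A.submatrix (Subtype.val : {v // v ∉ ({i} : Finset V)} → V)
              Subtype.val) := by
          rw [reindex_apply, Equiv.symm_symm]
        rw [h2, charpoly_reindex]

lemma eval_charpoly_eq' {V : Type*} [Fintype V] [DecidableEq V]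
    (A : Matrix V V ℝ) (θ : ℝ) :
    (A.charpoly).eval θ = (θ • (1 : Matrix V V ℝ) - A).det := by
  rw [Matrix.charpoly, ← coe_evalRingHom, RingHom.map_det]
  congr 1
  ext a b
  by_cases h : a = b
  · subst h
    simp [charmatrix_apply_eq, Matrix.one_apply]
  · simp [charmatrix_apply_ne _ _ _ h, Matrix.one_apply_ne h]

lemma key_identity' {V : Type*} [Fintype V] [DecidableEq V]
    (Φ : Finset ℝ) (E : ℝ → Matrix V V ℝ) (A : Matrix V V ℝ)
    (hdecomp : A = ∑ θ ∈ Φ, θ • E θ)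
    (hidem : ∀ θ ∈ Φ, E θ * E θ = E θ)
    (horth : ∀ θ ∈ Φ, ∀ θ' ∈ Φ, θ ≠ θ' → E θ * E θ' = 0)
    (hsum : ∑ θ ∈ Φ, E θ = 1) (i : V) :
    (∏ θ ∈ Φ, (X - Polynomial.C θ)) * (charmatrix A).adjugate i i =
      A.charpoly * ∑ θ ∈ Φ, (Polynomial.C ((E θ) i i)) * ∏ μ ∈ Φ.erase θ, (X - Polynomial.C μ) := by
  set F : ℝ → Matrix V V ℝ[X] := fun θ => (E θ).map Polynomial.C with hF
  have hFone : ∑ θ ∈ Φ, F θ = 1 := by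
    calc ∑ θ ∈ Φ, F θ = (∑ θ ∈ Φ, E θ).map ⇑(Polynomial.C) := by
          ext a b
          simp [hF, Matrix.map_apply, Matrix.sum_apply]
      _ = (1 : Matrix V V ℝ).map ⇑(Polynomial.C) := by rw [hsum]
      _ = 1 := Matrix.map_one _ (map_zero _) (map_one _)
  have hchar : charmatrix A = ∑ θ ∈ Φ, (X - Polynomial.C θ) • F θ := by
    have h1 : charmatrix A = (X : ℝ[X]) • (1 : Matrix V V ℝ[X]) - A.map ⇑(Polynomial.C) := by
      ext a b
      by_cases h : a = b
      · subst h
        simp [charmatrix_apply_eq, Matrix.one_apply, Matrix.map_apply]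
      · simp [charmatrix_apply_ne _ _ _ h, Matrix.one_apply_ne h, Matrix.map_apply]
    have h2 : A.map ⇑(Polynomial.C) = ∑ θ ∈ Φ, Polynomial.C θ • F θ := by
      rw [hdecomp]
      ext a b
      simp [hF, Matrix.map_apply, Matrix.sum_apply]
    rw [h1, h2, ← hFone, Finset.smul_sum, ← Finset.sum_sub_distrib]
    exact Finset.sum_congr rfl fun θ _ => (sub_smul _ _ _).symm
  set f : ℝ[X] := ∏ θ ∈ Φ, (X - Polynomial.C θ) with hf
  set B' : Matrix V V ℝ[X] := ∑ θ ∈ Φ, (∏ μ ∈ Φ.erase θ, (X - Polynomial.C μ)) • F θ with hB'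
  have hBB' : charmatrix A * B' = f • 1 := by
    rw [hchar, hB', Finset.sum_mul_sum]
    have key : ∀ θ ∈ Φ, (∑ μ ∈ Φ, ((X - Polynomial.C θ) • F θ) *
        ((∏ ν ∈ Φ.erase μ, (X - Polynomial.C ν)) • F μ)) = f • F θ := by
      intro θ hθ
      rw [Finset.sum_eq_single θ]
      · rw [Matrix.smul_mul, Matrix.mul_smul, hF]
        simp only
        rw [← Matrix.map_mul (f := (Polynomial.C : ℝ →+* ℝ[X])), hidem θ hθ, smul_smul]
        have hfe : f = ((X : ℝ[X]) - Polynomial.C θ) * ∏ ν ∈ Φ.erase θ, (X - Polynomial.C ν) :=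
          (Finset.mul_prod_erase Φ (fun x => (X : ℝ[X]) - Polynomial.C x) hθ).symm
        rw [hfe]
      · intro ν hν hne
        rw [Matrix.smul_mul, Matrix.mul_smul, hF]
        simp only
        rw [← Matrix.map_mul (f := (Polynomial.C : ℝ →+* ℝ[X])), horth θ hθ ν hν (Ne.symm hne)]
        simp
      · intro h; exact absurd hθ h
    rw [Finset.sum_congr rfl key, ← Finset.smul_sum, hFone]
  have hdetne : (charmatrix A).det ≠ 0 := (Matrix.charpoly_monic A).ne_zero
  have h1 : charmatrix A * (f • (charmatrix A).adjugate)
      = charmatrix A * ((charmatrix A).det • B') := by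
    rw [Matrix.mul_smul, Matrix.mul_smul, Matrix.mul_adjugate, hBB', smul_comm]
  have h2 := congrArg (fun M => (charmatrix A).adjugate * M) h1
  simp only [← Matrix.mul_assoc, Matrix.adjugate_mul] at h2
  rw [Matrix.smul_mul, Matrix.smul_mul, Matrix.one_mul, Matrix.one_mul] at h2
  have h3 : (charmatrix A).det * (f * (charmatrix A).adjugate i i)
      = (charmatrix A).det * ((charmatrix A).det * B' i i) := by
    have := congrFun (congrFun h2 i) i
    simpa [Matrix.smul_apply, smul_eq_mul] using this
  have h4 := mul_left_cancel₀ hdetne h3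
  rw [h4]
  congr 1
  rw [hB']
  simp [Matrix.sum_apply, Matrix.smul_apply, smul_eq_mul, hF, Matrix.map_apply, mul_comm]

end AuxEigen

/-- Characteristic polynomial (over ℝ) of the adjacency matrix of the induced subgraph of `G`
obtained by deleting the vertices in `S`. -/
noncomputable def phiDel {V : Type*} [Fintype V] [DecidableEq V]
    (G : SimpleGraph V) [DecidableRel G.Adj] (S : Finset V) : Polynomial ℝ :=
  ((G.adjMatrix ℝ).submatrix (Subtype.val : {v // v ∉ S} → V) Subtype.val).charpoly

/-- The sum, over all paths `P` from `i` to `j` in `G`, of the characteristic polynomial of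
the graph obtained from `G` by deleting all vertices of `P`. -/
noncomputable def pathSum {V : Type*} [Fintype V] [DecidableEq V]
    (G : SimpleGraph V) [DecidableRel G.Adj] (i j : V) : Polynomial ℝ :=
  ∑ P : G.Path i j, phiDel G P.1.support.toFinset

lemma phiDel_empty' {V : Type*} [Fintype V] [DecidableEq V]
    (G : SimpleGraph V) [DecidableRel G.Adj] :
    phiDel G ∅ = (G.adjMatrix ℝ).charpoly := by
  unfold phiDel
  let e : {v // v ∉ (∅ : Finset V)} ≃ V := Equiv.subtypeUnivEquiv (by simp)
  have h : (G.adjMatrix ℝ).submatrix (Subtype.val : {v // v ∉ (∅ : Finset V)} → V) Subtype.val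
      = reindex e.symm e.symm (G.adjMatrix ℝ) := by
    rw [reindex_apply, Equiv.symm_symm]; rfl
  rw [h, charpoly_reindex]

theorem eigenvalue_support_iff_positive_diagonal_and_poles
    {V : Type*} [Fintype V] [DecidableEq V]
    (G : SimpleGraph V) [DecidableRel G.Adj] (i : V)
    -- spectral decomposition of the adjacency matrix into distinct eigenvalues `Φ`
    -- with orthogonal eigenprojectors `E θ`
    (Φ : Finset ℝ) (E : ℝ → Matrix V V ℝ)
    (hdecomp : G.adjMatrix ℝ = ∑ θ ∈ Φ, θ • E θ)
    (hsym : ∀ θ ∈ Φ, (E θ).IsSymm)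
    (hidem : ∀ θ ∈ Φ, E θ * E θ = E θ)
    (horth : ∀ θ ∈ Φ, ∀ θ' ∈ Φ, θ ≠ θ' → E θ * E θ' = 0)
    (hsum : ∑ θ ∈ Φ, E θ = 1) :
    (∀ θ ∈ Φ, (E θ *ᵥ Pi.single i 1 ≠ 0 ↔ 0 < (E θ) i i)) ∧
    (∀ θ : ℝ, (θ ∈ Φ ∧ E θ *ᵥ Pi.single i 1 ≠ 0) ↔
      Polynomial.rootMultiplicity θ (phiDel G {i}) <
        Polynomial.rootMultiplicity θ (phiDel G ∅)) := by
  -- diagonal entries are sums of squares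
  have hdiag : ∀ θ ∈ Φ, (E θ) i i = ∑ j, (E θ i j) ^ 2 := by
    intro θ hθ
    conv_lhs => rw [← hidem θ hθ]
    rw [Matrix.mul_apply]
    refine Finset.sum_congr rfl fun j _ => ?_
    have hs : E θ j i = E θ i j := by
      conv_lhs => rw [← (hsym θ hθ)]
      rfl
    rw [hs, sq]
  have hnonneg : ∀ θ ∈ Φ, 0 ≤ (E θ) i i := by
    intro θ hθ
    rw [hdiag θ hθ]
    exact Finset.sum_nonneg fun j _ => sq_nonneg _
  have hpart1 : ∀ θ ∈ Φ, (E θ *ᵥ Pi.single i 1 ≠ 0 ↔ 0 < (E θ) i i) := by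
    intro θ hθ
    rw [mulVec_single]
    constructor
    · intro h
      rcases (hnonneg θ hθ).lt_or_eq with h' | h'
      · exact h'
      · exfalso
        apply h
        have hz : ∀ j, E θ i j = 0 := by
          intro j
          have h0 : ∑ j, (E θ i j) ^ 2 = 0 := by rw [← hdiag θ hθ, ← h']
          have := (Finset.sum_eq_zero_iff_of_nonneg
            (fun j _ => sq_nonneg (E θ i j))).mp h0 j (Finset.mem_univ j)
          exact pow_eq_zero_iff (two_ne_zero) |>.mp this
        funext j
        have hs : E θ j i = E θ i j := by
          conv_lhs => rw [← (hsym θ hθ)]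
          rfl
        simp [hs, hz j]
    · intro h hv
      have := congrFun hv i
      simp only [Pi.smul_apply, op_smul_eq_mul, Matrix.col_apply, mul_one, Pi.zero_apply] at this
      rw [this] at h
      exact lt_irrefl 0 h
  refine ⟨hpart1, fun θ => ?_⟩
  -- the key polynomial identity
  have hphii : phiDel G {i} = (charmatrix (G.adjMatrix ℝ)).adjugate i i :=
    (aux_adjugate_diag' (G.adjMatrix ℝ) i).symm
  have hphie : phiDel G ∅ = (G.adjMatrix ℝ).charpoly := phiDel_empty' G
  set g : ℝ[X] := ∑ μ ∈ Φ, (Polynomial.C ((E μ) i i)) * ∏ ν ∈ Φ.erase μ, (X - Polynomial.C ν)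
    with hg
  have hstar : (∏ μ ∈ Φ, (X - Polynomial.C μ)) * phiDel G {i} = phiDel G ∅ * g := by
    rw [hphii, hphie, hg]
    exact key_identity' Φ E (G.adjMatrix ℝ) hdecomp hidem horth hsum i
  have hphii0 : phiDel G {i} ≠ 0 := by
    rw [hphii, aux_adjugate_diag']
    exact (Matrix.charpoly_monic _).ne_zero
  have hphie0 : phiDel G ∅ ≠ 0 := by
    rw [hphie]; exact (Matrix.charpoly_monic _).ne_zero
  have hfmonic : (∏ μ ∈ Φ, ((X : ℝ[X]) - Polynomial.C μ)).Monic :=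
    monic_prod_of_monic _ _ fun μ _ => monic_X_sub_C μ
  have hf0 : (∏ μ ∈ Φ, ((X : ℝ[X]) - Polynomial.C μ)) ≠ 0 := hfmonic.ne_zero
  by_cases hθΦ : θ ∈ Φ
  · have hpne : (∏ ν ∈ Φ.erase θ, ((X : ℝ[X]) - Polynomial.C ν)).eval θ ≠ 0 := by
      rw [eval_prod]
      refine Finset.prod_ne_zero_iff.mpr fun ν hν => ?_
      simp only [eval_sub, eval_X, eval_C]
      exact sub_ne_zero.mpr (Ne.symm (Finset.mem_erase.mp hν).1)
    have hevalg : g.eval θ = ((E θ) i i) * (∏ ν ∈ Φ.erase θ, ((X : ℝ[X]) - Polynomial.C ν)).eval θ := by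
      rw [hg, eval_finset_sum]
      rw [Finset.sum_eq_single θ]
      · simp
      · intro μ hμ hne
        have hzero : (∏ ν ∈ Φ.erase μ, ((X : ℝ[X]) - Polynomial.C ν)).eval θ = 0 := by
          rw [eval_prod]
          refine Finset.prod_eq_zero (Finset.mem_erase.mpr ⟨Ne.symm hne, hθΦ⟩) ?_
          simp
        simp [hzero]
      · intro h; exact absurd hθΦ h
    have hrmf : rootMultiplicity θ (∏ μ ∈ Φ, ((X : ℝ[X]) - Polynomial.C μ)) = 1 := by
      have hfe : (∏ μ ∈ Φ, ((X : ℝ[X]) - Polynomial.C μ))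
          = ((X : ℝ[X]) - Polynomial.C θ) * ∏ ν ∈ Φ.erase θ, (X - Polynomial.C ν) :=
        (Finset.mul_prod_erase Φ (fun x => (X : ℝ[X]) - Polynomial.C x) hθΦ).symm
      rw [hfe, rootMultiplicity_mul (hfe ▸ hf0), rootMultiplicity_X_sub_C_self,
        rootMultiplicity_eq_zero (by simpa [IsRoot] using hpne)]
    have hR : phiDel G ∅ * g ≠ 0 := by
      rw [← hstar]; exact mul_ne_zero hf0 hphii0
    have hg_ne : g ≠ 0 := right_ne_zero_of_mul hR
    have hrmeq : 1 + rootMultiplicity θ (phiDel G {i})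
        = rootMultiplicity θ (phiDel G ∅) + rootMultiplicity θ g := by
      have := congrArg (rootMultiplicity θ) hstar
      rwa [rootMultiplicity_mul (mul_ne_zero hf0 hphii0), rootMultiplicity_mul hR, hrmf] at this
    constructor
    · rintro ⟨-, hv⟩
      have hpos := (hpart1 θ hθΦ).mp hv
      have hrg : rootMultiplicity θ g = 0 := by
        apply rootMultiplicity_eq_zero
        rw [IsRoot, hevalg]
        exact mul_ne_zero (ne_of_gt hpos) hpne
      omega
    · intro hlt
      refine ⟨hθΦ, ?_⟩
      by_contra hv
      have h0 : (E θ) i i = 0 := by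
        rcases (hnonneg θ hθΦ).lt_or_eq with h' | h'
        · exact absurd hv ((hpart1 θ hθΦ).mpr h')
        · exact h'.symm
      have hroot : g.IsRoot θ := by rw [IsRoot, hevalg, h0, zero_mul]
      have h1 : 1 ≤ rootMultiplicity θ g := (rootMultiplicity_pos hg_ne).mpr hroot
      omega
  · have hzero : rootMultiplicity θ (phiDel G ∅) = 0 := by
      apply rootMultiplicity_eq_zero
      rw [hphie, IsRoot, eval_charpoly_eq']
      -- show the determinant is nonzero
      have hinv : (θ • (1 : Matrix V V ℝ) - G.adjMatrix ℝ)
          * (∑ μ ∈ Φ, (θ - μ)⁻¹ • E μ) = 1 := by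
        have hM : θ • (1 : Matrix V V ℝ) - G.adjMatrix ℝ = ∑ μ ∈ Φ, (θ - μ) • E μ := by
          rw [← hsum, hdecomp, Finset.smul_sum, ← Finset.sum_sub_distrib]
          exact Finset.sum_congr rfl fun μ _ => (sub_smul θ μ (E μ)).symm
        rw [hM, Finset.sum_mul_sum]
        have key : ∀ μ ∈ Φ, (∑ ν ∈ Φ, ((θ - μ) • E μ) * ((θ - ν)⁻¹ • E ν)) = E μ := by
          intro μ hμ
          rw [Finset.sum_eq_single μ]
          · rw [Matrix.smul_mul, Matrix.mul_smul, hidem μ hμ, smul_smul,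
              mul_inv_cancel₀ (sub_ne_zero.mpr fun h => hθΦ (by rwa [h])), one_smul]
          · intro ν hν hne
            rw [Matrix.smul_mul, Matrix.mul_smul, horth μ hμ ν hν (Ne.symm hne),
              smul_zero, smul_zero]
          · intro h; exact absurd hμ h
        rw [Finset.sum_congr rfl key, hsum]
      intro h0
      have := congrArg Matrix.det hinv
      rw [Matrix.det_mul, h0, zero_mul, Matrix.det_one] at this
      exact zero_ne_one this
    constructor
    · rintro ⟨h, -⟩; exact absurd h hθΦ
    · intro hlt
      rw [hzero] at hlt
      exact absurd hlt (Nat.not_lt_zero _)
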